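/- Fix u ∈ (0,1) and points u₁ = 0, u_m = 1, and values {v_i}_{i∈[n]} ⊂ [0,1]. Let ℓ, r ≥ 0 with |u·ℓ − (1−u)·r| = Δ. Then one can transfer mass δ_i ≥ 0 from a row with parameter u to the row with parameter 0 (if u·ℓ > (1−u)·r) or to the row with parameter 1 (otherwise), with Σ_i δ_i equal to Δ/u or Δ/(1−u) respectively, so that the calibration constraint u·ℓ' = (1−u)·r' holds after the move, and the increase in cost Σ_i (|u' − v_i| − |u − v_i|)·δ_i is at most Δ, where u' ∈ {0,1} is the destination row. -/
import Mathlib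


theorem stmt11 (n : ℕ) (u : ℝ) (hu : u ∈ Set.Ioo (0 : ℝ) 1)
    (v : Fin n → ℝ) (hv : ∀ i, v i ∈ Set.Icc (0 : ℝ) 1)
    (ℓ r : ℝ) (hℓ : 0 ≤ ℓ) (hr : 0 ≤ r)
    (Δ : ℝ) (hΔ : |u * ℓ - (1 - u) * r| = Δ)
    (δ : Fin n → ℝ) (hδ : ∀ i, 0 ≤ δ i) :
    -- Case `u·ℓ > (1-u)·r`: move mass `Δ/u` to the row with parameter `u' = 0`
    ((1 - u) * r < u * ℓ → (∑ i, δ i) = Δ / u →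
      u * (ℓ - ∑ i, δ i) = (1 - u) * r ∧
      ∑ i, (|0 - v i| - |u - v i|) * δ i ≤ Δ) ∧
    -- Case `u·ℓ ≤ (1-u)·r`: move mass `Δ/(1-u)` to the row with parameter `u' = 1`
    (u * ℓ ≤ (1 - u) * r → (∑ i, δ i) = Δ / (1 - u) →
      u * ℓ = (1 - u) * (r - ∑ i, δ i) ∧
      ∑ i, (|1 - v i| - |u - v i|) * δ i ≤ Δ) := by
  obtain ⟨hu0, hu1⟩ := hu
  constructor
  · intro hlt hsum
    have hΔ' : Δ = u * ℓ - (1 - u) * r := by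
      rw [← hΔ, abs_of_pos (by linarith)]
    constructor
    · rw [hsum, hΔ']
      field_simp
      ring
    · have hb : ∀ i, (|0 - v i| - |u - v i|) * δ i ≤ u * δ i := by
        intro i
        apply mul_le_mul_of_nonneg_right _ (hδ i)
        calc |0 - v i| - |u - v i| ≤ |(0 - v i) - (u - v i)| := abs_sub_abs_le_abs_sub _ _
          _ = u := by rw [show (0 - v i) - (u - v i) = -u by ring, abs_neg, abs_of_pos hu0]
      calc ∑ i, (|0 - v i| - |u - v i|) * δ i ≤ ∑ i, u * δ i :=
            Finset.sum_le_sum fun i _ => hb i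
        _ = u * ∑ i, δ i := by rw [Finset.mul_sum]
        _ = Δ := by rw [hsum]; field_simp
  · intro hle hsum
    have hΔ' : Δ = (1 - u) * r - u * ℓ := by
      rw [← hΔ, abs_of_nonpos (by linarith), neg_sub]
    constructor
    · rw [hsum, hΔ']
      have h1u : (1:ℝ) - u ≠ 0 := by linarith
      field_simp
      ring
    · have hb : ∀ i, (|1 - v i| - |u - v i|) * δ i ≤ (1 - u) * δ i := by
        intro i
        apply mul_le_mul_of_nonneg_right _ (hδ i)
        calc |1 - v i| - |u - v i| ≤ |(1 - v i) - (u - v i)| := abs_sub_abs_le_abs_sub _ _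
          _ = 1 - u := by rw [show (1 - v i) - (u - v i) = 1 - u by ring,
                abs_of_pos (by linarith)]
      calc ∑ i, (|1 - v i| - |u - v i|) * δ i ≤ ∑ i, (1 - u) * δ i :=
            Finset.sum_le_sum fun i _ => hb i
        _ = (1 - u) * ∑ i, δ i := by rw [Finset.mul_sum]
        _ = Δ := by
            rw [hsum, mul_comm, div_mul_cancel₀ _ (by linarith : (1:ℝ) - u ≠ 0)]
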